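/- Define T₅ : {x ∈ {0,1}⁵ : x₁ = 0} → {0,1}⁴ by T₅(x) = (x₁⊕x₂, x₁⊕x₅, x₁⊕x₂⊕x₄⊕x₅, x₁⊕x₃⊕x₄⊕x₅). For t = (t₁,t₂,t₃,t₄) ∈ {0,1}⁴ define E_t = Π^{(4)}_{t₄} ∘ CNOT_{3→1} ∘ Π^{(3)}_{t₃} ∘ CNOT_{4→1} ∘ Π^{(2)}_{t₂} ∘ CNOT_{5→1} ∘ Π^{(1)}_{t₁}, where Π^{(1)}_0 = Π_{Aa}, Π^{(2)}_0 = Π^{(4)}_0 = |0⟩⟨0|_A ⊗ I, Π^{(3)}_0 = Π_{Aa}, and subscript 1 denotes the complementary projection. Then for every x with x₁ = 0 and s ∈ {+1,−1}: E_t|Φ_{s,x}⟩ = CNOT_{3→1}CNOT_{4→1}CNOT_{5→1}|Φ_{s,x}⟩ if T₅(x) = t, and E_t|Φ_{s,x}⟩ = 0 otherwise; moreover T₅ is a bijection. Consequently, each outcome branch retains exactly one ± pair of the five-qubit GHZ basis. (Classification underlying Theorem 2: the five-qubit GHZ basis is locally distinguished with one EPR pair.) -/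

import Mathlib

noncomputable section

/-- View a coefficient function as a vector of the Euclidean (Hilbert) space. -/
def ofFun {ι : Type*} [Fintype ι] (f : ι → ℂ) : EuclideanSpace ℂ ι := WithLp.toLp 2 f

/-- Transport an endomorphism of the coefficient functions to the Euclidean space. -/
def toE {ι : Type*} [Fintype ι] (T : (ι → ℂ) →ₗ[ℂ] (ι → ℂ)) :
    Module.End ℂ (EuclideanSpace ℂ ι) :=
  (WithLp.linearEquiv 2 ℂ (ι → ℂ)).symm.toLinearMap ∘ₗ T ∘ₗ
    (WithLp.linearEquiv 2 ℂ (ι → ℂ)).toLinearMap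

open Classical in
/-- Diagonal orthogonal projection keeping exactly the basis vectors whose index
satisfies `f`. -/
def diagP {ι : Type*} [Fintype ι] (f : ι → Prop) : Module.End ℂ (EuclideanSpace ℂ ι) :=
  toE (LinearMap.pi fun i => (if f i then (1 : ℂ) else 0) • LinearMap.proj i)

/-- The linear map induced by a self-inverse permutation `σ` of the basis indices:
it sends the basis vector `|x⟩` to `|σ x⟩`. -/
def permE {ι : Type*} [Fintype ι] (σ : ι → ι) : Module.End ℂ (EuclideanSpace ℂ ι) :=
  toE (LinearMap.funLeft ℂ ℂ σ)

/-- Tensor product of two vectors, realized on the product index set. -/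
def tensE {ι κ : Type*} [Fintype ι] [Fintype κ]
    (u : EuclideanSpace ℂ ι) (w : EuclideanSpace ℂ κ) : EuclideanSpace ℂ (ι × κ) :=
  ofFun fun p => u p.1 * w p.2

/-- Bitwise complement of a bit string. -/
def bcompl {n : ℕ} (x : Fin n → Fin 2) : Fin n → Fin 2 := fun i => x i + 1

/-- The sign `+1` or `−1`, indexed by a Boolean. -/
def sgn (s : Bool) : ℂ := if s then 1 else -1

/-- Computational basis vector `|x⟩` of the `n`-qubit space. -/
def ketQ {n : ℕ} (x : Fin n → Fin 2) : EuclideanSpace ℂ (Fin n → Fin 2) :=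
  EuclideanSpace.single x 1

/-- The GHZ basis state `|ψ_s⟩_x = (|x⟩ + s|x̄⟩)/√2`. -/
def ghz {n : ℕ} (s : Bool) (x : Fin n → Fin 2) : EuclideanSpace ℂ (Fin n → Fin 2) :=
  (Real.sqrt 2 : ℂ)⁻¹ • (ketQ x + sgn s • ketQ (bcompl x))

/-- The five main qubits `A,B,C,D,E` (positions `0,1,2,3,4`) together with the two
ancilla qubits `a,b` (positions `0,1` of the second factor). -/
abbrev K5 : Type := EuclideanSpace ℂ ((Fin 5 → Fin 2) × (Fin 2 → Fin 2))

/-- Basis vector of the two ancilla qubits `a, b`. -/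
def ket2 (z : Fin 2 → Fin 2) : EuclideanSpace ℂ (Fin 2 → Fin 2) :=
  EuclideanSpace.single z 1

/-- The EPR state `|φ⁺⟩_{ab} = (|00⟩ + |11⟩)/√2` of the two ancilla qubits. -/
def phiPlus : EuclideanSpace ℂ (Fin 2 → Fin 2) :=
  ofFun fun z => if z 0 = z 1 then (Real.sqrt 2 : ℂ)⁻¹ else 0

/-- The post-measurement state
`|Φ_{s,x}⟩ = (|x⟩|x₂x₂⟩_{ab} + s|x̄⟩|x̄₂x̄₂⟩_{ab})/√2`. -/
def bigPhi (s : Bool) (x : Fin 5 → Fin 2) : K5 :=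
  (Real.sqrt 2 : ℂ)⁻¹ •
    (tensE (ketQ x) (ket2 fun _ => x 1) +
      sgn s • tensE (ketQ (bcompl x)) (ket2 fun _ => x 1 + 1))

/-- The projection `Π_{Bb} = |00⟩⟨00| + |11⟩⟨11|` on the pair `(B, b)`. -/
def projBb : Module.End ℂ K5 := diagP fun p => p.1 1 = p.2 1

/-- The projection `Π_{Aa} = |00⟩⟨00| + |11⟩⟨11|` on the pair `(A, a)`. -/
def projAa : Module.End ℂ K5 := diagP fun p => p.1 0 = p.2 0

/-- The projection `|0⟩⟨0|_A ⊗ I`. -/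
def proj0A : Module.End ℂ K5 := diagP fun p => p.1 0 = 0

/-- The CNOT gate with control the main qubit at position `c` and target the main
qubit `A` (position `0`), acting as the identity on the ancillas. -/
def cnotK (c : Fin 5) : Module.End ℂ K5 :=
  permE fun p => (Function.update p.1 0 (p.1 0 + p.1 c), p.2)

/-- The classification map
`T₅(x) = (x₁⊕x₂, x₁⊕x₅, x₁⊕x₂⊕x₄⊕x₅, x₁⊕x₃⊕x₄⊕x₅)`. -/
def T5map (x : {x : Fin 5 → Fin 2 // x 0 = 0}) : Fin 2 × Fin 2 × Fin 2 × Fin 2 :=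
  (x.1 0 + x.1 1, x.1 0 + x.1 4, x.1 0 + x.1 1 + x.1 3 + x.1 4,
    x.1 0 + x.1 2 + x.1 3 + x.1 4)

/-- From a projection `P`, the pair of complementary projections: outcome `0` is `P`,
outcome `1` is `I − P`. -/
def sel (P : Module.End ℂ K5) : Fin 2 → Module.End ℂ K5 :=
  fun b => if b = 0 then P else 1 - P

/-- The branch operator
`E_t = Π^{(4)}_{t₄} ∘ CNOT_{3→1} ∘ Π^{(3)}_{t₃} ∘ CNOT_{4→1} ∘ Π^{(2)}_{t₂} ∘ CNOT_{5→1} ∘ Π^{(1)}_{t₁}`,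
where `Π^{(1)}_0 = Π^{(3)}_0 = Π_{Aa}` and `Π^{(2)}_0 = Π^{(4)}_0 = |0⟩⟨0|_A ⊗ I`. -/
def branchOp5 (t : Fin 2 × Fin 2 × Fin 2 × Fin 2) : Module.End ℂ K5 :=
  sel proj0A t.2.2.2 * cnotK 2 * sel projAa t.2.2.1 * cnotK 3 *
    sel proj0A t.2.1 * cnotK 4 * sel projAa t.1

lemma toE_apply {ι : Type*} [Fintype ι] (T : (ι → ℂ) →ₗ[ℂ] (ι → ℂ)) (v : EuclideanSpace ℂ ι) (i : ι) :
    toE T v i = T v i := rfl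

open Classical in
lemma diagP_apply {ι : Type*} [Fintype ι] (f : ι → Prop) (v : EuclideanSpace ℂ ι) (i : ι) :
    diagP f v i = if f i then v i else 0 := by
  simp [diagP, toE_apply, LinearMap.pi_apply, ite_smul]
  split <;> simp

lemma permE_apply {ι : Type*} [Fintype ι] (σ : ι → ι) (v : EuclideanSpace ℂ ι) (i : ι) :
    permE σ v i = v (σ i) := rfl

lemma permE_single {ι : Type*} [Fintype ι] [DecidableEq ι] (σ : ι → ι)
    (hσ : Function.Involutive σ) (i : ι) (a : ℂ) :
    permE σ (EuclideanSpace.single i a) = EuclideanSpace.single (σ i) a := by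
  ext p
  rw [permE_apply, EuclideanSpace.single_apply, EuclideanSpace.single_apply]
  congr 1
  simp only [eq_iff_iff]
  constructor
  · rintro rfl; exact (hσ p).symm
  · rintro rfl; exact hσ i

open Classical in
lemma diagP_single {ι : Type*} [Fintype ι] [DecidableEq ι] (f : ι → Prop) (i : ι) (a : ℂ) :
    diagP f (EuclideanSpace.single i a) = if f i then EuclideanSpace.single i a else 0 := by
  by_cases hf : f i
  · rw [if_pos hf]
    ext p
    rw [diagP_apply]
    split
    · rfl
    · next hp =>
      symm
      rw [EuclideanSpace.single_apply, if_neg]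
      rintro rfl; exact hp hf
  · rw [if_neg hf]
    ext p
    rw [diagP_apply]
    split
    · next hp =>
      have hpi : p ≠ i := by rintro rfl; exact hf hp
      simp [EuclideanSpace.single_apply, hpi]
    · simp

open Classical in
lemma sel_diagP_single (f : ((Fin 5 → Fin 2) × (Fin 2 → Fin 2)) → Prop) (b : Fin 2)
    (i : (Fin 5 → Fin 2) × (Fin 2 → Fin 2)) (a : ℂ) :
    sel (diagP f) b (EuclideanSpace.single i a) =
      if (b = 0 ↔ f i) then EuclideanSpace.single i a else 0 := by
  unfold sel
  by_cases hb : b = 0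
  · subst hb
    rw [if_pos rfl, diagP_single]
    by_cases hf : f i
    · rw [if_pos hf, if_pos (by simp [hf])]
    · rw [if_neg hf, if_neg (by simp [hf])]
  · simp only [hb, if_false]
    rw [LinearMap.sub_apply, Module.End.one_apply, diagP_single]
    by_cases hf : f i <;> simp [hf, hb]

lemma fin2_add_self (a : Fin 2) : a + a = 0 := by revert a; decide

lemma cnot_invol (c : Fin 5) (hc : c ≠ 0) :
    Function.Involutive (fun p : (Fin 5 → Fin 2) × (Fin 2 → Fin 2) =>
      (Function.update p.1 0 (p.1 0 + p.1 c), p.2)) := by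
  intro p
  refine Prod.ext ?_ rfl
  show Function.update (Function.update p.1 0 (p.1 0 + p.1 c)) 0
      ((Function.update p.1 0 (p.1 0 + p.1 c)) 0 + (Function.update p.1 0 (p.1 0 + p.1 c)) c)
      = p.1
  rw [Function.update_idem, Function.update_self, Function.update_of_ne hc,
    add_assoc, fin2_add_self, add_zero, Function.update_eq_self]

lemma cnotK_single (c : Fin 5) (hc : c ≠ 0) (y : Fin 5 → Fin 2) (z : Fin 2 → Fin 2) (a : ℂ) :
    cnotK c (EuclideanSpace.single (y, z) a) =
      EuclideanSpace.single (Function.update y 0 (y 0 + y c), z) a := by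
  unfold cnotK
  exact permE_single _ (cnot_invol c hc) _ _

open Classical in
lemma branch_single (t : Fin 2 × Fin 2 × Fin 2 × Fin 2) (y : Fin 5 → Fin 2)
    (z : Fin 2 → Fin 2) (a : ℂ) :
    branchOp5 t (EuclideanSpace.single (y, z) a) =
      if ((t.1 = 0 ↔ y 0 = z 0) ∧ (t.2.1 = 0 ↔ y 0 + y 4 = 0) ∧
          (t.2.2.1 = 0 ↔ y 0 + y 4 + y 3 = z 0) ∧ (t.2.2.2 = 0 ↔ y 0 + y 4 + y 3 + y 2 = 0))
      then EuclideanSpace.single (Function.update y 0 (y 0 + y 4 + y 3 + y 2), z) a else 0 := by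
  simp only [branchOp5, projAa, proj0A, Module.End.mul_apply]
  rw [sel_diagP_single]
  by_cases h1 : (t.1 = 0 ↔ y 0 = z 0)
  · rw [if_pos h1, cnotK_single 4 (by decide), sel_diagP_single]
    simp only [Function.update_self, Function.update_of_ne (show (3:Fin 5) ≠ 0 by decide),
      Function.update_of_ne (show (2:Fin 5) ≠ 0 by decide)]
    by_cases h2 : (t.2.1 = 0 ↔ y 0 + y 4 = 0)
    · rw [if_pos h2, cnotK_single 3 (by decide), sel_diagP_single]
      simp only [Function.update_idem, Function.update_self,
        Function.update_of_ne (show (3:Fin 5) ≠ 0 by decide),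
        Function.update_of_ne (show (2:Fin 5) ≠ 0 by decide)]
      by_cases h3 : (t.2.2.1 = 0 ↔ y 0 + y 4 + y 3 = z 0)
      · rw [if_pos h3, cnotK_single 2 (by decide), sel_diagP_single]
        simp only [Function.update_idem, Function.update_self,
          Function.update_of_ne (show (2:Fin 5) ≠ 0 by decide)]
        by_cases h4 : (t.2.2.2 = 0 ↔ y 0 + y 4 + y 3 + y 2 = 0)
        · rw [if_pos h4, if_pos ⟨h1, h2, h3, h4⟩]
        · rw [if_neg h4, if_neg (by tauto)]
      · rw [if_neg h3, map_zero, map_zero, if_neg (by tauto)]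
    · rw [if_neg h2, map_zero, map_zero, map_zero, map_zero, if_neg (by tauto)]
  · rw [if_neg h1, map_zero, map_zero, map_zero, map_zero, map_zero, map_zero,
      if_neg (by tauto)]

set_option synthInstance.maxSize 2000 in
set_option synthInstance.maxHeartbeats 1000000 in
set_option maxHeartbeats 1000000 in
lemma cond_iff_pt (x : Fin 5 → Fin 2) (t : Fin 2 × Fin 2 × Fin 2 × Fin 2) :
    ((t.1 = 0 ↔ x 0 = x 1) ∧ (t.2.1 = 0 ↔ x 0 + x 4 = 0) ∧
     (t.2.2.1 = 0 ↔ x 0 + x 4 + x 3 = x 1) ∧ (t.2.2.2 = 0 ↔ x 0 + x 4 + x 3 + x 2 = 0)) ↔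
    (x 0 + x 1, x 0 + x 4, x 0 + x 1 + x 3 + x 4, x 0 + x 2 + x 3 + x 4) = t := by
  obtain ⟨t1, t2, t3, t4⟩ := t
  simp only [Prod.mk.injEq]
  generalize x 0 = a0
  generalize x 1 = a1
  generalize x 2 = a2
  generalize x 3 = a3
  generalize x 4 = a4
  revert a0 a1 a2 a3 a4 t1 t2 t3 t4
  decide

set_option synthInstance.maxSize 2000 in
set_option synthInstance.maxHeartbeats 1000000 in
set_option maxHeartbeats 1000000 in
lemma cond_iff_pt' (x : Fin 5 → Fin 2) (t : Fin 2 × Fin 2 × Fin 2 × Fin 2) :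
    ((t.1 = 0 ↔ bcompl x 0 = x 1 + 1) ∧ (t.2.1 = 0 ↔ bcompl x 0 + bcompl x 4 = 0) ∧
     (t.2.2.1 = 0 ↔ bcompl x 0 + bcompl x 4 + bcompl x 3 = x 1 + 1) ∧
     (t.2.2.2 = 0 ↔ bcompl x 0 + bcompl x 4 + bcompl x 3 + bcompl x 2 = 0)) ↔
    (x 0 + x 1, x 0 + x 4, x 0 + x 1 + x 3 + x 4, x 0 + x 2 + x 3 + x 4) = t := by
  obtain ⟨t1, t2, t3, t4⟩ := t
  simp only [Prod.mk.injEq, bcompl]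
  generalize x 0 = a0
  generalize x 1 = a1
  generalize x 2 = a2
  generalize x 3 = a3
  generalize x 4 = a4
  revert a0 a1 a2 a3 a4 t1 t2 t3 t4
  decide

lemma tens_single (x : Fin 5 → Fin 2) (z : Fin 2 → Fin 2) :
    tensE (ketQ x) (ket2 z) = EuclideanSpace.single (x, z) 1 := by
  ext p
  show ketQ x p.1 * ket2 z p.2 = _
  rw [ketQ, ket2, EuclideanSpace.single_apply, EuclideanSpace.single_apply,
    EuclideanSpace.single_apply]
  by_cases h1 : p.1 = x <;> by_cases h2 : p.2 = z <;>
    simp [h1, h2, Prod.ext_iff]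

lemma bigPhi_eq (s : Bool) (x : Fin 5 → Fin 2) :
    bigPhi s x = (Real.sqrt 2 : ℂ)⁻¹ •
      (EuclideanSpace.single (x, fun _ => x 1) (1:ℂ) +
        sgn s • EuclideanSpace.single (bcompl x, fun _ => x 1 + 1) (1:ℂ)) := by
  rw [bigPhi, tens_single, tens_single]

lemma cnotK_invol (c : Fin 5) (hc : c ≠ 0) (v : K5) : cnotK c (cnotK c v) = v := by
  ext p
  exact congrArg (v ·) (cnot_invol c hc p)

lemma fin2_succ_ne (a : Fin 2) : a + 1 ≠ a := by revert a; decide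

lemma bigPhi_ne (s : Bool) (x : Fin 5 → Fin 2) : bigPhi s x ≠ 0 := by
  rw [bigPhi_eq]
  intro h
  have hxx : x ≠ bcompl x := fun hh => fin2_succ_ne (x 0) (congrFun hh 0).symm
  have e1 : (EuclideanSpace.single ((x, fun _ => x 1) :
      (Fin 5 → Fin 2) × (Fin 2 → Fin 2)) (1:ℂ)) (x, fun _ => x 1) = 1 := by
    simp [EuclideanSpace.single_apply]
  have e2 : (EuclideanSpace.single ((bcompl x, fun _ => x 1 + 1) :
      (Fin 5 → Fin 2) × (Fin 2 → Fin 2)) (1:ℂ)) (x, fun _ => x 1) = 0 := by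
    rw [EuclideanSpace.single_apply, if_neg]
    exact fun hh => hxx (congrArg Prod.fst hh)
  have h2 := congrArg (fun w => w (x, fun _ => x 1)) h
  simp only [PiLp.smul_apply, PiLp.add_apply, PiLp.zero_apply, smul_eq_mul,
    e1, e2, mul_zero, add_zero, mul_one] at h2
  have h3 : (Real.sqrt 2 : ℂ) = 0 := by simpa [inv_eq_zero] using h2
  have h4 : Real.sqrt 2 ≠ 0 := Real.sqrt_ne_zero'.mpr (by norm_num)
  exact h4 (by exact_mod_cast h3)

lemma main_eq (s : Bool) (x : Fin 5 → Fin 2) (hx : x 0 = 0)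
    (t : Fin 2 × Fin 2 × Fin 2 × Fin 2) (h : T5map ⟨x, hx⟩ = t) :
    branchOp5 t (bigPhi s x) = cnotK 2 (cnotK 3 (cnotK 4 (bigPhi s x))) := by
  have h' : (x 0 + x 1, x 0 + x 4, x 0 + x 1 + x 3 + x 4, x 0 + x 2 + x 3 + x 4) = t := h
  rw [bigPhi_eq]
  simp only [map_smul, map_add, branch_single,
    cnotK_single 4 (by decide), cnotK_single 3 (by decide), cnotK_single 2 (by decide),
    Function.update_idem, Function.update_self,
    Function.update_of_ne (show (4:Fin 5) ≠ 0 by decide),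
    Function.update_of_ne (show (3:Fin 5) ≠ 0 by decide),
    Function.update_of_ne (show (2:Fin 5) ≠ 0 by decide)]
  rw [if_pos ((cond_iff_pt x t).mpr h'), if_pos ((cond_iff_pt' x t).mpr h')]

lemma main_zero (s : Bool) (x : Fin 5 → Fin 2) (hx : x 0 = 0)
    (t : Fin 2 × Fin 2 × Fin 2 × Fin 2) (h : T5map ⟨x, hx⟩ ≠ t) :
    branchOp5 t (bigPhi s x) = 0 := by
  have h' : (x 0 + x 1, x 0 + x 4, x 0 + x 1 + x 3 + x 4, x 0 + x 2 + x 3 + x 4) ≠ t := h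
  rw [bigPhi_eq]
  simp only [map_smul, map_add, branch_single]
  rw [if_neg (fun hc => h' ((cond_iff_pt x t).mp hc)),
    if_neg (fun hc => h' ((cond_iff_pt' x t).mp hc))]
  simp

set_option maxHeartbeats 1000000 in
lemma T5_bij : Function.Bijective T5map := by
  decide

/-- classification underlying Theorem 2: each branch operator `E_t`
fixes (up to the three CNOTs) exactly the states `|Φ_{s,x}⟩` with `T₅(x) = t` and
annihilates all others; `T₅` is a bijection; so each outcome branch retains exactly
one `±` pair of the five-qubit GHZ basis. -/
theorem thm2_branch_classification :
    (∀ (s : Bool) (x : Fin 5 → Fin 2) (hx : x 0 = 0)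
        (t : Fin 2 × Fin 2 × Fin 2 × Fin 2),
      (T5map ⟨x, hx⟩ = t →
        branchOp5 t (bigPhi s x) = cnotK 2 (cnotK 3 (cnotK 4 (bigPhi s x)))) ∧
      (T5map ⟨x, hx⟩ ≠ t → branchOp5 t (bigPhi s x) = 0)) ∧
    Function.Bijective T5map ∧
    (∀ (s : Bool) (x : Fin 5 → Fin 2) (hx : x 0 = 0)
        (t : Fin 2 × Fin 2 × Fin 2 × Fin 2),
      branchOp5 t (bigPhi s x) ≠ 0 ↔ T5map ⟨x, hx⟩ = t) := by
  refine ⟨fun s x hx t => ⟨main_eq s x hx t, main_zero s x hx t⟩, T5_bij,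
    fun s x hx t => ⟨?_, ?_⟩⟩
  · intro hne
    by_contra hne2
    exact hne (main_zero s x hx t hne2)
  · intro heq hz
    rw [main_eq s x hx t heq] at hz
    have h1 := congrArg (fun w => cnotK 2 w) hz
    simp only [cnotK_invol 2 (by decide), map_zero] at h1
    have h2 := congrArg (fun w => cnotK 3 w) h1
    simp only [cnotK_invol 3 (by decide), map_zero] at h2
    have h3 := congrArg (fun w => cnotK 4 w) h2
    simp only [cnotK_invol 4 (by decide), map_zero] at h3
    exact bigPhi_ne s x h3
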